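/- Let m ≥ 1 and n = 2^m. Let I be a nonempty finite index set, and for each i ∈ I let l_i be an integer with 0 ≤ l_i ≤ m and a_i an integer with 0 ≤ a_i < 2^{l_i}, and let C_i = {g ∈ ZMod n : some (equivalently, every) integer lift of g is congruent to a_i modulo 2^{l_i}}. Assume the sets C_i are pairwise disjoint. Fix i* ∈ I and set w = |{ν₂(a_{i*} − a_i) : i ∈ I, i ≠ i*}|. Then there exists G : ZMod n → ℂ whose support has cardinality exactly 2^w and whose discrete Fourier transform satisfies Ĝ(g) = 1 for every g ∈ C_{i*} and Ĝ(g) = 0 for every g ∈ ⋃_{i ∈ I, i ≠ i*} C_i. -/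

import Mathlib

open scoped BigOperators

/-- The one-dimensional discrete Fourier transform on `ZMod n`. -/
noncomputable def dft1 (n : ℕ) [NeZero n] (x : ZMod n → ℂ) : ZMod n → ℂ :=
  fun f => ∑ t : ZMod n, x t *
    Complex.exp (-(2 * (Real.pi : ℂ) * Complex.I) * (((f * t : ZMod n)).val : ℂ) / (n : ℂ))

/-- `eN n k = exp(2πi k / n)`. -/
noncomputable def eN (n : ℕ) (k : ℤ) : ℂ :=
  Complex.exp (2 * (Real.pi : ℂ) * Complex.I * (k : ℂ) / (n : ℂ))

lemma eN_add (n : ℕ) (k k' : ℤ) : eN n (k + k') = eN n k * eN n k' := by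
  rw [eN, eN, eN, ← Complex.exp_add]
  push_cast
  ring_nf

lemma eN_mul_n (n : ℕ) [NeZero n] (j : ℤ) : eN n (n * j) = 1 := by
  have hn : (n : ℂ) ≠ 0 := Nat.cast_ne_zero.mpr (NeZero.ne n)
  rw [eN]
  rw [show 2 * (Real.pi : ℂ) * Complex.I * ((n * j : ℤ) : ℂ) / (n : ℂ)
      = (j : ℂ) * (2 * (Real.pi : ℂ) * Complex.I) by push_cast; field_simp]
  exact Complex.exp_int_mul_two_pi_mul_I j

lemma eN_ne_zero (n : ℕ) (k : ℤ) : eN n k ≠ 0 := Complex.exp_ne_zero _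

lemma eN_congr (n : ℕ) [NeZero n] {k k' : ℤ} (h : (k : ZMod n) = (k' : ZMod n)) :
    eN n k = eN n k' := by
  have : ((k - k' : ℤ) : ZMod n) = 0 := by push_cast [h]; ring
  rw [ZMod.intCast_zmod_eq_zero_iff_dvd] at this
  obtain ⟨j, hj⟩ := this
  have : k = k' + n * j := by omega
  rw [this, eN_add, eN_mul_n, mul_one]

lemma eN_sum {α : Type*} (n : ℕ) (T : Finset α) (f : α → ℤ) :
    eN n (∑ v ∈ T, f v) = ∏ v ∈ T, eN n (f v) := by
  classical
  induction T using Finset.induction_on with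
  | empty => simp [eN]
  | insert _ _ h ih => rw [Finset.sum_insert h, eN_add, Finset.prod_insert h, ih]

lemma factor_one (m v : ℕ) (hv : v + 1 ≤ m) (b : ℤ) (hb : (2:ℤ)^(v+1) ∣ b) :
    eN (2^m) (b * 2 ^ (m - 1 - v)) = 1 := by
  obtain ⟨c, hc⟩ := hb
  have key : b * 2 ^ (m - 1 - v) = ((2^m : ℕ) : ℤ) * c := by
    subst hc
    have h1 : (2:ℤ)^(v+1) * 2^(m-1-v) = 2^m := by
      rw [← pow_add]; congr 1; omega
    push_cast
    linear_combination c * h1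
  rw [key, eN_mul_n]

lemma factor_neg (m v : ℕ) (hv : v + 1 ≤ m) (d : ℤ) (hd : Odd d) :
    eN (2^m) (2^v * d * 2 ^ (m - 1 - v)) = -1 := by
  have key : 2 * (Real.pi : ℂ) * Complex.I * ((2^v * d * 2 ^ (m-1-v) : ℤ) : ℂ) / ((2^m : ℕ) : ℂ)
      = (d : ℂ) * ((Real.pi:ℂ) * Complex.I) := by
    have h2 : (2:ℂ)^m ≠ 0 := pow_ne_zero _ two_ne_zero
    have hpow : (2:ℂ)^v * 2^(m-1-v) * 2 = 2^m := by
      calc (2:ℂ)^v * 2^(m-1-v) * 2 = 2^(v + (m-1-v) + 1) := by ring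
        _ = 2^m := by congr 1; omega
    push_cast
    field_simp
    linear_combination (d:ℂ) * hpow
  rw [eN, key, Complex.exp_int_mul, Complex.exp_pi_mul_I]
  exact hd.neg_one_zpow

theorem stmt2 (m : ℕ) (hm : 1 ≤ m) (n : ℕ) (hn : n = 2 ^ m) [NeZero n]
    {ι : Type} [Fintype ι] [Nonempty ι] [DecidableEq ι]
    (l : ι → ℕ) (hl : ∀ i, l i ≤ m)
    (a : ι → ℤ) (ha0 : ∀ i, 0 ≤ a i) (ha : ∀ i, a i < 2 ^ l i)
    (C : ι → Set (ZMod n))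
    (hC : ∀ i, C i = {g : ZMod n | ((g.val : ℤ)) % 2 ^ l i = a i})
    (hdisj : Pairwise (fun i j => Disjoint (C i) (C j)))
    (istar : ι)
    (w : ℕ)
    (hw : w = ((Finset.univ.erase istar).image
      (fun i => padicValInt 2 (a istar - a i))).card) :
    ∃ G : ZMod n → ℂ,
      (Function.support G).ncard = 2 ^ w ∧
      (∀ g ∈ C istar, dft1 n G g = 1) ∧
      (∀ i, i ≠ istar → ∀ g ∈ C i, dft1 n G g = 0) := by
  classical
  subst hn
  -- basic inequalities
  have hpow_le : ∀ i, (2:ℤ) ^ l i ≤ 2 ^ m := fun i =>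
    pow_le_pow_right₀ (by norm_num) (hl i)
  -- membership in classes of canonical lifts
  have hlift : ∀ i, ∀ j : ι, (2:ℤ) ^ l j ∣ (a i - a j) → ((a i).toNat : ZMod (2^m)) ∈ C j := by
    intro i j hdvd
    have h1 : (a i).toNat < 2^m := by
      have h2 := hpow_le i
      have h3 := ha i
      have h4 := ha0 i
      have h5 : ((2^m : ℕ) : ℤ) = (2:ℤ)^m := by push_cast; ring
      omega
    have hval : (((a i).toNat : ZMod (2^m))).val = (a i).toNat := ZMod.val_cast_of_lt h1
    rw [hC j]
    simp only [Set.mem_setOf_eq, hval]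
    have h2 : (((a i).toNat : ℕ) : ℤ) = a i := Int.toNat_of_nonneg (ha0 i)
    rw [h2]
    have h3 : a i % 2 ^ l j = a j % 2 ^ l j := by
      rw [Int.emod_eq_emod_iff_emod_sub_eq_zero]
      exact Int.emod_eq_zero_of_dvd hdvd
    rw [h3]
    exact Int.emod_eq_of_lt (ha0 j) (ha j)
  -- key valuation facts
  have hkey : ∀ i, i ≠ istar →
      padicValInt 2 (a istar - a i) < min (l i) (l istar) ∧
      ∃ d : ℤ, Odd d ∧ a istar - a i = 2 ^ padicValInt 2 (a istar - a i) * d := by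
    intro i hi
    have hnd : ¬ ((2:ℤ) ^ min (l i) (l istar) ∣ (a istar - a i)) := by
      intro hdvd
      rcases le_total (l i) (l istar) with h | h
      · have hd1 : (2:ℤ) ^ l i ∣ (a istar - a i) := by
          rwa [min_eq_left h] at hdvd
        have hm1 : ((a istar).toNat : ZMod (2^m)) ∈ C i := hlift istar i hd1
        have hm2 : ((a istar).toNat : ZMod (2^m)) ∈ C istar := hlift istar istar (by simp)
        exact Set.disjoint_left.mp (hdisj hi) hm1 hm2
      · have hd1 : (2:ℤ) ^ l istar ∣ (a i - a istar) := by
          rw [min_eq_right h] at hdvd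
          have h2 := dvd_neg.mpr hdvd
          rwa [neg_sub] at h2
        have hm1 : ((a i).toNat : ZMod (2^m)) ∈ C istar := hlift i istar hd1
        have hm2 : ((a i).toNat : ZMod (2^m)) ∈ C i := hlift i i (by simp)
        exact Set.disjoint_left.mp (hdisj hi) hm2 hm1
    have hv : ∀ k : ℕ, (2:ℤ)^k ∣ (a istar - a i) ↔
        (a istar - a i = 0 ∨ k ≤ padicValInt 2 (a istar - a i)) := by
      intro k
      have := padicValInt_dvd_iff (p := 2) k (a istar - a i)
      simpa using this
    have hne : a istar - a i ≠ 0 := by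
      intro h; exact hnd (h ▸ dvd_zero _)
    constructor
    · by_contra hcon
      push_neg at hcon
      exact hnd ((hv _).mpr (Or.inr hcon))
    · obtain ⟨d, hd⟩ := (hv (padicValInt 2 (a istar - a i))).mpr (Or.inr le_rfl)
      refine ⟨d, ?_, hd⟩
      rw [← Int.not_even_iff_odd]
      intro hev
      obtain ⟨e, he⟩ := hev
      have : (2:ℤ) ^ (padicValInt 2 (a istar - a i) + 1) ∣ (a istar - a i) := by
        refine ⟨e, ?_⟩
        conv_lhs => rw [hd, he]
        ring
      rcases (hv _).mp this with h | h
      · exact hne h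
      · omega
  -- the set of valuations
  set S : Finset ℕ := (Finset.univ.erase istar).image (fun i => padicValInt 2 (a istar - a i)) with hS
  have hSm : ∀ v ∈ S, v + 1 ≤ m := by
    intro v hv
    rw [hS, Finset.mem_image] at hv
    obtain ⟨i, hi, rfl⟩ := hv
    have h1 := (hkey i (Finset.mem_erase.mp hi).1).1
    have h2 := hl istar
    omega
  have hSl : ∀ v ∈ S, v + 1 ≤ l istar := by
    intro v hv
    rw [hS, Finset.mem_image] at hv
    obtain ⟨i, hi, rfl⟩ := hv
    have h1 := (hkey i (Finset.mem_erase.mp hi).1).1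
    omega
  set s : Finset ℕ → ℕ := fun T => ∑ v ∈ T, 2^(m-1-v) with hs
  have hs_eq : ∀ T, T ⊆ S → s T = ∑ j ∈ T.image (fun v => m-1-v), 2^j := by
    intro T hT
    rw [hs]
    rw [Finset.sum_image]
    intro x hx y hy hxy
    have h1 := hSm x (hT hx); have h2 := hSm y (hT hy); simp only at hxy; omega
  have hrange : ∀ M : ℕ, ∑ j ∈ Finset.range M, 2^j = 2^M - 1 := by
    intro M
    induction M with
    | zero => simp
    | succ k ih =>
      rw [Finset.sum_range_succ, ih, pow_succ]
      have : 1 ≤ 2^k := Nat.one_le_two_pow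
      omega
  have hs_lt : ∀ T, T ⊆ S → s T < 2^m := by
    intro T hT
    rw [hs_eq T hT]
    have hsub : T.image (fun v => m-1-v) ⊆ Finset.range m := by
      intro j hj
      rw [Finset.mem_image] at hj
      obtain ⟨v, hv, rfl⟩ := hj
      have := hSm v (hT hv)
      exact Finset.mem_range.mpr (by omega)
    have h1 : 1 ≤ 2^m := Nat.one_le_two_pow
    calc ∑ j ∈ T.image (fun v => m-1-v), 2^j
        ≤ ∑ j ∈ Finset.range m, 2^j := Finset.sum_le_sum_of_subset hsub
      _ = 2^m - 1 := hrange m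
      _ < 2^m := by omega
  have hs_inj : ∀ T1, T1 ⊆ S → ∀ T2, T2 ⊆ S → s T1 = s T2 → T1 = T2 := by
    intro T1 h1 T2 h2 heq
    rw [hs_eq T1 h1, hs_eq T2 h2] at heq
    have himg := Finset.geomSum_injective (n := 2) le_rfl heq
    have recover : ∀ T, T ⊆ S → (T.image (fun v => m-1-v)).image (fun j => m-1-j) = T := by
      intro T hT
      rw [Finset.image_image]
      have h3 : T.image ((fun j => m-1-j) ∘ (fun v => m-1-v)) = T.image id := by
        apply Finset.image_congr
        intro x hx
        have hx' : x ∈ T := hx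
        have := hSm x (hT hx')
        simp only [Function.comp, id]
        omega
      rw [h3, Finset.image_id]
    rw [← recover T1 h1, ← recover T2 h2, himg]
  set e : Finset ℕ → ZMod (2^m) := fun T => -((s T : ℕ) : ZMod (2^m)) with he
  have he_inj : ∀ T1 ∈ S.powerset, ∀ T2 ∈ S.powerset, e T1 = e T2 → T1 = T2 := by
    intro T1 h1 T2 h2 heq
    rw [Finset.mem_powerset] at h1 h2
    apply hs_inj T1 h1 T2 h2
    simp only [he, neg_inj] at heq
    have := congrArg ZMod.val heq
    rwa [ZMod.val_cast_of_lt (hs_lt T1 h1), ZMod.val_cast_of_lt (hs_lt T2 h2)] at this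
  set c : Finset ℕ → ℂ := fun T => (1/2 : ℂ)^w * eN (2^m) (-(a istar * s T)) with hc
  have hc_ne : ∀ T, c T ≠ 0 := fun T =>
    mul_ne_zero (pow_ne_zero _ (by norm_num)) (eN_ne_zero _ _)
  set G : ZMod (2^m) → ℂ := fun t => ∑ T ∈ S.powerset, if e T = t then c T else 0 with hG
  have hGval : ∀ T ∈ S.powerset, G (e T) = c T := by
    intro T hT
    show (∑ T' ∈ S.powerset, if e T' = e T then c T' else 0) = c T
    rw [Finset.sum_eq_single_of_mem T hT]
    · rw [if_pos rfl]
    · intro T' hT' hne'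
      rw [if_neg]
      intro hcon
      exact hne' (he_inj T' hT' T hT hcon)
  -- the main DFT formula
  have hdft : ∀ g : ZMod (2^m),
      dft1 (2^m) G g
        = (1/2:ℂ)^w * ∏ v ∈ S, (eN (2^m) (((g.val:ℤ) - a istar) * 2^(m-1-v)) + 1) := by
    intro g
    have key : ∀ T, T ⊆ S →
        Complex.exp (-(2 * (Real.pi:ℂ) * Complex.I) * (((g * e T : ZMod (2^m))).val : ℂ) / ((2^m : ℕ) : ℂ))
          = eN (2^m) ((g.val:ℤ) * s T) := by
      intro T hTS
      have h1 : Complex.exp (-(2 * (Real.pi:ℂ) * Complex.I) * (((g * e T : ZMod (2^m))).val : ℂ) / ((2^m : ℕ) : ℂ))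
          = eN (2^m) (-((((g * e T : ZMod (2^m))).val : ℕ) : ℤ)) := by
        rw [eN]; congr 1; push_cast; ring
      rw [h1]
      apply eN_congr
      push_cast [ZMod.natCast_val, ZMod.cast_id]
      simp only [he]
      ring
    calc dft1 (2^m) G g
        = ∑ t : ZMod (2^m), ∑ T ∈ S.powerset,
            (if e T = t then c T * Complex.exp (-(2 * (Real.pi:ℂ) * Complex.I) * (((g * t : ZMod (2^m))).val : ℂ) / ((2^m : ℕ) : ℂ)) else 0) := by
          rw [dft1]
          apply Finset.sum_congr rfl
          intro t _
          rw [hG, Finset.sum_mul]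
          apply Finset.sum_congr rfl
          intro T _
          rw [ite_mul, zero_mul]
      _ = ∑ T ∈ S.powerset, ∑ t : ZMod (2^m),
            (if e T = t then c T * Complex.exp (-(2 * (Real.pi:ℂ) * Complex.I) * (((g * t : ZMod (2^m))).val : ℂ) / ((2^m : ℕ) : ℂ)) else 0) :=
          Finset.sum_comm
      _ = ∑ T ∈ S.powerset, c T * eN (2^m) ((g.val:ℤ) * s T) := by
          apply Finset.sum_congr rfl
          intro T hT
          rw [Finset.sum_ite_eq Finset.univ (e T)
            (fun t => c T * Complex.exp (-(2 * (Real.pi:ℂ) * Complex.I) * (((g * t : ZMod (2^m))).val : ℂ) / ((2^m : ℕ) : ℂ)))]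
          rw [if_pos (Finset.mem_univ _), key T (Finset.mem_powerset.mp hT)]
      _ = ∑ T ∈ S.powerset, (1/2:ℂ)^w * eN (2^m) (((g.val:ℤ) - a istar) * s T) := by
          apply Finset.sum_congr rfl
          intro T _
          rw [hc]
          have h2 : (((g.val:ℤ) - a istar) * s T) = (-(a istar * s T)) + (g.val:ℤ) * s T := by
            ring
          rw [h2, eN_add]
          ring
      _ = (1/2:ℂ)^w * ∑ T ∈ S.powerset, eN (2^m) (((g.val:ℤ) - a istar) * s T) := by
          rw [Finset.mul_sum]
      _ = (1/2:ℂ)^w * ∑ T ∈ S.powerset, ∏ v ∈ T, eN (2^m) (((g.val:ℤ) - a istar) * 2^(m-1-v)) := by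
          congr 1
          apply Finset.sum_congr rfl
          intro T _
          have h3 : (((g.val:ℤ) - a istar) * s T) = ∑ v ∈ T, ((g.val:ℤ) - a istar) * 2^(m-1-v) := by
            rw [hs]
            push_cast
            rw [Finset.mul_sum]
          rw [h3, eN_sum]
      _ = (1/2:ℂ)^w * ∏ v ∈ S, (eN (2^m) (((g.val:ℤ) - a istar) * 2^(m-1-v)) + 1) := by
          congr 1
          rw [Finset.prod_add]
          apply Finset.sum_congr rfl
          intro T _
          rw [Finset.prod_const_one, mul_one]
  refine ⟨G, ?_, ?_, ?_⟩
  · -- support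
    have hsupp : Function.support G = ↑(S.powerset.image e) := by
      ext t
      simp only [Function.mem_support, Finset.coe_image, Set.mem_image, Finset.mem_coe]
      constructor
      · intro hne'
        by_contra hcon
        push_neg at hcon
        apply hne'
        rw [hG]
        apply Finset.sum_eq_zero
        intro T hT
        rw [if_neg (hcon T hT)]
      · rintro ⟨T, hT, rfl⟩
        rw [hGval T hT]
        exact hc_ne T
    rw [hsupp, Set.ncard_coe_finset,
      Finset.card_image_of_injOn (fun T1 h1 T2 h2 h => he_inj T1 h1 T2 h2 h),
      Finset.card_powerset, hw]
  · -- g ∈ C istar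
    intro g hg
    rw [hdft g]
    have hb : (2:ℤ)^(l istar) ∣ ((g.val:ℤ) - a istar) := by
      rw [hC istar] at hg
      have h1 : ((g.val:ℕ):ℤ) % 2^(l istar) = a istar := hg
      have h2 : a istar % 2^(l istar) = a istar := Int.emod_eq_of_lt (ha0 _) (ha _)
      apply Int.dvd_of_emod_eq_zero
      rw [← Int.emod_eq_emod_iff_emod_sub_eq_zero, h1, h2]
    have hfac : ∀ v ∈ S, eN (2^m) (((g.val:ℤ) - a istar) * 2^(m-1-v)) + 1 = 2 := by
      intro v hv
      have hvm := hSm v hv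
      have hvl := hSl v hv
      have hdvd : (2:ℤ)^(v+1) ∣ ((g.val:ℤ) - a istar) :=
        dvd_trans (pow_dvd_pow 2 hvl) hb
      rw [factor_one m v hvm _ hdvd]
      norm_num
    rw [Finset.prod_congr rfl hfac, Finset.prod_const, ← hw, ← mul_pow]
    norm_num
  · -- g ∈ C i, i ≠ istar
    intro i hi g hg
    rw [hdft g]
    obtain ⟨hvlt, d, hd_odd, hd⟩ := hkey i hi
    set v := padicValInt 2 (a istar - a i) with hv
    have hvS : v ∈ S :=
      Finset.mem_image.mpr ⟨i, Finset.mem_erase.mpr ⟨hi, Finset.mem_univ i⟩, rfl⟩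
    have hvm : v + 1 ≤ m := le_trans (by omega) (hl istar)
    have hgi : (2:ℤ)^(v+1) ∣ ((g.val:ℤ) - a i) := by
      have hbi : (2:ℤ)^(l i) ∣ ((g.val:ℤ) - a i) := by
        rw [hC i] at hg
        have h1 : ((g.val:ℕ):ℤ) % 2^(l i) = a i := hg
        have h2 : a i % 2^(l i) = a i := Int.emod_eq_of_lt (ha0 _) (ha _)
        apply Int.dvd_of_emod_eq_zero
        rw [← Int.emod_eq_emod_iff_emod_sub_eq_zero, h1, h2]
      exact dvd_trans (pow_dvd_pow 2 (by omega)) hbi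
    obtain ⟨k, hk⟩ := hgi
    have hfac : eN (2^m) (((g.val:ℤ) - a istar) * 2^(m-1-v)) + 1 = 0 := by
      have hbd : ((g.val:ℤ) - a istar) = 2^v * (2*k - d) := by
        have h4 : (g.val:ℤ) - a istar = ((g.val:ℤ) - a i) - (a istar - a i) := by ring
        rw [h4, hk, hd]
        ring
      rw [hbd, factor_neg m v hvm (2*k-d) ?_]
      · ring
      · rw [Int.odd_iff] at hd_odd ⊢
        omega
    apply mul_eq_zero_of_right
    exact Finset.prod_eq_zero hvS hfac
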